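/- For ω₀ > 0, r ≥ 0, φ ∈ [0,2π), and λ > 0, the function W(t) = ω₀ / (cosh(2r) + cos(2ω₀t/λ + φ)·sinh(2r)) satisfies the rescaled Gelfand–Dikii equation W² = ω₀² - (λ²/2)(Ẅ/W - (3/2)(Ẇ/W)²). -/

import Mathlib

lemma gd_aux (ω₀ lam c s x y D : ℝ) (hω : ω₀ ≠ 0) (hlam : lam ≠ 0) (hD : D ≠ 0)
    (hDdef : D = c + x * s) (p1 : y ^ 2 + x ^ 2 = 1) (p2 : c ^ 2 - s ^ 2 = 1) :
    (ω₀ / D) ^ 2 = ω₀ ^ 2 - lam ^ 2 / 2 *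
      (((ω₀ * (x * (2 * ω₀ / lam) * (2 * ω₀ / lam) * s) * D ^ 2 -
          ω₀ * (y * (2 * ω₀ / lam) * s) * (2 * D ^ 1 * (-y * (2 * ω₀ / lam) * s))) / (D ^ 2) ^ 2)
          / (ω₀ / D)
        - 3 / 2 * ((ω₀ * (y * (2 * ω₀ / lam) * s) / D ^ 2) / (ω₀ / D)) ^ 2) := by
  have key : D ^ 2 - 2 * s * x * D - s ^ 2 * y ^ 2 = 1 := by
    subst hDdef; nlinarith [p1, p2]
  field_simp
  linear_combination (-1 : ℝ) * key

/-- For `ω₀ > 0`, `r ≥ 0`, `φ ∈ [0,2π)` and `λ > 0`, the function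
`W(t) = ω₀ / (cosh(2r) + cos(2ω₀t/λ + φ) sinh(2r))` solves the rescaled Gelfand–Dikii
equation `W² = ω₀² - (λ²/2)(Ẅ/W - (3/2)(Ẇ/W)²)`. -/
theorem gelfand_dikii_constant_frequency_solutions
    (ω₀ r φ lam : ℝ) (hω₀ : 0 < ω₀) (hr : 0 ≤ r) (hφ : 0 ≤ φ ∧ φ < 2 * Real.pi)
    (hlam : 0 < lam)
    (W : ℝ → ℝ)
    (hW : W = fun t =>
      ω₀ / (Real.cosh (2 * r) + Real.cos (2 * ω₀ * t / lam + φ) * Real.sinh (2 * r))) :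
    ∀ t, (W t) ^ 2 =
      ω₀ ^ 2 - (lam ^ 2 / 2) *
        (deriv (deriv W) t / W t - (3 / 2) * (deriv W t / W t) ^ 2) := by
  subst hW
  have hs0 : (0:ℝ) ≤ Real.sinh (2*r) := Real.sinh_nonneg_iff.mpr (by linarith)
  have hD : ∀ u : ℝ, 0 < Real.cosh (2*r) + Real.cos (2*ω₀*u/lam + φ) * Real.sinh (2*r) := by
    intro u
    have h1 := Real.neg_one_le_cos (2*ω₀*u/lam + φ)
    have h2 : Real.cosh (2*r) - Real.sinh (2*r) = Real.exp (-(2*r)) := Real.cosh_sub_sinh _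
    have h3 : 0 < Real.exp (-(2*r)) := Real.exp_pos _
    nlinarith [mul_le_mul_of_nonneg_right h1 hs0]
  have hθ : ∀ u : ℝ, HasDerivAt (fun x : ℝ => 2*ω₀*x/lam + φ) (2*ω₀/lam) u := by
    intro u
    simpa using (((hasDerivAt_id u).const_mul (2*ω₀)).div_const lam).add_const φ
  have hDder : ∀ u : ℝ, HasDerivAt
      (fun x : ℝ => Real.cosh (2*r) + Real.cos (2*ω₀*x/lam + φ) * Real.sinh (2*r))
      (-Real.sin (2*ω₀*u/lam + φ) * (2*ω₀/lam) * Real.sinh (2*r)) u :=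
    fun u => (((hθ u).cos).mul_const _).const_add _
  have hWder : ∀ u : ℝ, HasDerivAt
      (fun t : ℝ => ω₀ / (Real.cosh (2 * r) + Real.cos (2 * ω₀ * t / lam + φ) * Real.sinh (2 * r)))
      (ω₀ * (Real.sin (2*ω₀*u/lam + φ) * (2*ω₀/lam) * Real.sinh (2*r)) /
        (Real.cosh (2*r) + Real.cos (2*ω₀*u/lam + φ) * Real.sinh (2*r))^2) u := by
    intro u
    have h := (hasDerivAt_const u ω₀).div (hDder u) (ne_of_gt (hD u))
    refine h.congr_deriv ?_
    ring
  have hderivW : deriv (fun t : ℝ => ω₀ / (Real.cosh (2 * r) + Real.cos (2 * ω₀ * t / lam + φ) * Real.sinh (2 * r)))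
      = fun u : ℝ => ω₀ * (Real.sin (2*ω₀*u/lam + φ) * (2*ω₀/lam) * Real.sinh (2*r)) /
        (Real.cosh (2*r) + Real.cos (2*ω₀*u/lam + φ) * Real.sinh (2*r))^2 := by
    funext u
    exact (hWder u).deriv
  intro t
  rw [hderivW]
  beta_reduce
  set c := Real.cosh (2*r) with hc
  set s := Real.sinh (2*r) with hsdef
  set θ := 2*ω₀*t/lam + φ with hθdef
  have hDt : 0 < c + Real.cos θ * s := hD t
  have hN : HasDerivAt (fun u : ℝ => ω₀ * (Real.sin (2*ω₀*u/lam + φ) * (2*ω₀/lam) * s))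
      (ω₀ * (Real.cos θ * (2*ω₀/lam) * (2*ω₀/lam) * s)) t :=
    (((hθ t).sin.mul_const (2*ω₀/lam)).mul_const s).const_mul ω₀
  have hDsq : HasDerivAt (fun u : ℝ => (c + Real.cos (2*ω₀*u/lam + φ) * s)^2)
      (2 * (c + Real.cos θ * s) ^ 1 * (-Real.sin θ * (2*ω₀/lam) * s)) t :=
    (hDder t).pow 2
  have hW2 : HasDerivAt (fun u : ℝ => ω₀ * (Real.sin (2*ω₀*u/lam + φ) * (2*ω₀/lam) * s) /
        (c + Real.cos (2*ω₀*u/lam + φ) * s)^2)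
      ((ω₀ * (Real.cos θ * (2*ω₀/lam) * (2*ω₀/lam) * s) * (c + Real.cos θ * s)^2
        - ω₀ * (Real.sin θ * (2*ω₀/lam) * s) * (2 * (c + Real.cos θ * s) ^ 1 * (-Real.sin θ * (2*ω₀/lam) * s)))
        / ((c + Real.cos θ * s)^2)^2) t :=
    hN.div hDsq (pow_ne_zero 2 (ne_of_gt hDt))
  rw [hW2.deriv]
  have p2 : c ^ 2 - s ^ 2 = 1 := by rw [hc, hsdef]; exact Real.cosh_sq_sub_sinh_sq _
  exact gd_aux ω₀ lam c s (Real.cos θ) (Real.sin θ) (c + Real.cos θ * s)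
    (ne_of_gt hω₀) (ne_of_gt hlam) (ne_of_gt hDt) rfl (Real.sin_sq_add_cos_sq θ) p2
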